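/- Let x be a p-integrable function on a sigma-finite measure space X (1 < p < ∞) and let f_z(s) = e^{−s(1−z)/q} on ℝ with the measure e^s ds, where 1/p + 1/q = 1 and z in the closed strip with Re z < 1, q_z given by 1/q_z = (1−Re z)/q. Then the decreasing rearrangement of x ⊗ f_z on X × ℝ satisfies μ_{x⊗f_z}(s) = s^{−1/q_z}‖x‖_{L_{q_z}}, and hence ‖x ⊗ f_z‖_{L_{q_z,∞}} = p_z ‖x‖_{L_{q_z}(X)} where 1/p_z + 1/q_z = 1 and ‖·‖_{L_{q,∞}} denotes sup_{t>0} t^{−1/p_z} ∫₀^t μ(s) ds. -/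

import Mathlib

open MeasureTheory

/-!
STATEMENT 8: For x ∈ L_{q_z}(X) and f_z(s) = e^{−s(1−z)/q} on (ℝ, eˢ ds), the
rearrangement of x ⊗ f_z on X × ℝ is μ_{x⊗f_z}(s) = s^{−1/q_z} ‖x‖_{L_{q_z}},
and ‖x ⊗ f_z‖_{L_{q_z,∞}} = sup_{t>0} t^{−1/p_z} ∫₀ᵗ μ_{x⊗f_z}(s) ds
= p_z ‖x‖_{L_{q_z}(X)}.
-/

/-- The measure eˢ ds on ℝ. -/
noncomputable def wmeasure : Measure ℝ :=
  MeasureTheory.volume.withDensity fun t => ENNReal.ofReal (Real.exp t)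

/-- The function f_z(s) = e^{−s(1−z)/q}. -/
noncomputable def fz (q : ℝ) (z : ℂ) : ℝ → ℂ :=
  fun s => Complex.exp (-(s : ℂ) * (1 - z) / (q : ℂ))

/-- Decreasing rearrangement of `g` with respect to `μ`. -/
noncomputable def rearr {α : Type*} [MeasurableSpace α] (μ : Measure α)
    (g : α → ℂ) (s : ℝ) : ℝ :=
  sInf {u : ℝ | 0 < u ∧ μ {x | u < ‖g x‖} ≤ ENNReal.ofReal s}

instance : SFinite wmeasure := by unfold wmeasure; infer_instance

lemma wmeasure_Iio (a : ℝ) : wmeasure (Set.Iio a) = ENNReal.ofReal (Real.exp a) := by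
  rw [wmeasure, withDensity_apply _ measurableSet_Iio,
    setLIntegral_congr Iio_ae_eq_Iic,
    ← ofReal_integral_eq_lintegral_ofReal (integrableOn_exp_Iic a)
      (Filter.Eventually.of_forall fun t => (Real.exp_pos t).le),
    integral_exp_Iic]

lemma wmeasure_exp_decay {a c u : ℝ} (ha : 0 < a) (hc : 0 ≤ c) (hu : 0 < u) :
    wmeasure {s : ℝ | u < c * Real.exp (-(s / a))} =
      ENNReal.ofReal (c ^ a * u ^ (-a)) := by
  rcases hc.eq_or_lt with hc0 | hc0
  · have hempty : {s : ℝ | u < c * Real.exp (-(s / a))} = ∅ := by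
      ext s
      simp [← hc0, not_lt.2 hu.le]
    rw [hempty, measure_empty, ← hc0, Real.zero_rpow ha.ne', zero_mul, ENNReal.ofReal_zero]
  · have hset : {s : ℝ | u < c * Real.exp (-(s / a))} = Set.Iio (a * Real.log (c / u)) := by
      ext s
      simp only [Set.mem_setOf_eq, Set.mem_Iio]
      rw [mul_comm c, ← div_lt_iff₀ hc0, ← Real.log_lt_iff_lt_exp (div_pos hu hc0), lt_neg,
        ← Real.log_inv, inv_div, div_lt_iff₀ ha, mul_comm]
    rw [hset, wmeasure_Iio]
    congr 1
    rw [mul_comm, ← Real.rpow_def_of_pos (div_pos hc0 hu), Real.div_rpow hc hu.le,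
      Real.rpow_neg hu.le, div_eq_mul_inv]

theorem stmt8 {X : Type*} [MeasurableSpace X] (μ : Measure X) [SigmaFinite μ]
    (p q : ℝ) (hp : 1 < p) (hpq : 1 / p + 1 / q = 1)
    (z : ℂ) (hz0 : 0 ≤ z.re) (hz1 : z.re < 1)
    (qz pz : ℝ) (hqz : 1 / qz = (1 - z.re) / q) (hpz : 1 / pz + 1 / qz = 1)
    (x : X → ℂ) (hxm : Measurable x)
    -- x ∈ L_{q_z}(X)
    (hx : Integrable (fun y => ‖x y‖ ^ qz) μ) :
    -- μ_{x⊗f_z}(s) = s^{−1/q_z} ‖x‖_{L_{q_z}}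
    (∀ s : ℝ, 0 < s →
      rearr (μ.prod wmeasure) (fun w => x w.1 * fz q z w.2) s =
        s ^ (-(1 / qz)) * (∫ y, ‖x y‖ ^ qz ∂μ) ^ (1 / qz)) ∧
    -- ‖x ⊗ f_z‖_{L_{q_z,∞}} = p_z ‖x‖_{L_{q_z}}
    sSup {r : ℝ | ∃ t : ℝ, 0 < t ∧
      r = t ^ (-(1 / pz)) *
        ∫ s in (0:ℝ)..t, rearr (μ.prod wmeasure) (fun w => x w.1 * fz q z w.2) s} =
      pz * (∫ y, ‖x y‖ ^ qz ∂μ) ^ (1 / qz) := by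
  -- basic positivity facts
  have hp0 : 0 < p := lt_trans one_pos hp
  have hip : 0 < 1 / p := by positivity
  have hip1 : 1 / p < 1 := by rw [div_lt_one hp0]; exact hp
  have hiq0 : 0 < 1 / q := by linarith
  have hq0 : 0 < q := one_div_pos.mp hiq0
  have hq1 : 1 < q := by
    rw [← div_lt_one hq0]; linarith
  have hiqz0 : 0 < 1 / qz := by rw [hqz]; exact div_pos (by linarith) hq0
  have hqz0 : 0 < qz := one_div_pos.mp hiqz0
  have hiqz1 : 1 / qz < 1 := by
    rw [hqz, div_lt_one hq0]; linarith
  have hipz0 : 0 < 1 / pz := by linarith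
  have hpz0 : 0 < pz := one_div_pos.mp hipz0
  set N : ℝ := ∫ y, ‖x y‖ ^ qz ∂μ with hN
  have hN0 : 0 ≤ N :=
    integral_nonneg fun y => Real.rpow_nonneg (norm_nonneg _) _
  -- |fz q z s| = exp (-(s/qz))
  have habs : ∀ s : ℝ, ‖fz q z s‖ = Real.exp (-(s / qz)) := by
    intro s
    have harg : (-(s : ℂ) * (1 - z) / (q : ℂ)) = ((-s / q : ℝ) : ℂ) * (1 - z) := by
      push_cast; ring
    rw [fz, harg, Complex.norm_exp, Complex.re_ofReal_mul]
    congr 1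
    have h1 : (1 - z).re = 1 - z.re := by simp
    rw [h1]
    have h3 : s / qz = s * ((1 - z.re) / q) := by rw [← hqz]; ring
    rw [h3]; ring
  -- distribution function
  have hdist : ∀ u : ℝ, 0 < u →
      (μ.prod wmeasure) {w : X × ℝ | u < ‖x w.1 * fz q z w.2‖} =
        ENNReal.ofReal (u ^ (-qz) * N) := by
    intro u hu
    have hseteq : {w : X × ℝ | u < ‖x w.1 * fz q z w.2‖} =
        {w : X × ℝ | u < ‖x w.1‖ * Real.exp (-(w.2 / qz))} := by
      ext w; rw [Set.mem_setOf_eq, Set.mem_setOf_eq, norm_mul, habs]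
    rw [hseteq]
    have hmA : MeasurableSet {w : X × ℝ | u < ‖x w.1‖ * Real.exp (-(w.2 / qz))} := by
      apply measurableSet_lt measurable_const
      exact (continuous_norm.measurable.comp (hxm.comp measurable_fst)).mul
        ((Real.continuous_exp.comp
          ((continuous_id.div_const qz).neg)).measurable.comp measurable_snd)
    rw [Measure.prod_apply hmA]
    have hinner : ∀ y : X,
        wmeasure (Prod.mk y ⁻¹' {w : X × ℝ | u < ‖x w.1‖ * Real.exp (-(w.2 / qz))}) =
        ENNReal.ofReal (‖x y‖ ^ qz) * ENNReal.ofReal (u ^ (-qz)) := by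
      intro y
      have : Prod.mk y ⁻¹' {w : X × ℝ | u < ‖x w.1‖ * Real.exp (-(w.2 / qz))} =
          {s : ℝ | u < ‖x y‖ * Real.exp (-(s / qz))} := rfl
      rw [this, wmeasure_exp_decay hqz0 (norm_nonneg _) hu,
        ENNReal.ofReal_mul (Real.rpow_nonneg (norm_nonneg _) _)]
    rw [lintegral_congr hinner,
      lintegral_mul_const _ (by
        have hm : Measurable fun y => ‖x y‖ ^ qz :=
          (continuous_norm.measurable.comp hxm).pow_const qz
        exact hm.ennreal_ofReal),
      ← ofReal_integral_eq_lintegral_ofReal hx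
        (Filter.Eventually.of_forall fun y => Real.rpow_nonneg (norm_nonneg _) _),
      ← ENNReal.ofReal_mul hN0, mul_comm]
  -- rearrangement formula for all s ≥ 0
  have hre : ∀ s : ℝ, 0 ≤ s →
      rearr (μ.prod wmeasure) (fun w => x w.1 * fz q z w.2) s =
        s ^ (-(1 / qz)) * N ^ (1 / qz) := by
    intro s hs
    rw [rearr]
    have hsetc : {u : ℝ | 0 < u ∧
        (μ.prod wmeasure) {w | u < ‖(fun w : X × ℝ => x w.1 * fz q z w.2) w‖} ≤
          ENNReal.ofReal s} =
        {u : ℝ | 0 < u ∧ u ^ (-qz) * N ≤ s} := by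
      ext u
      simp only [Set.mem_setOf_eq]
      constructor
      · rintro ⟨hu, h⟩
        refine ⟨hu, ?_⟩
        rw [hdist u hu, ENNReal.ofReal_le_ofReal_iff hs] at h
        exact h
      · rintro ⟨hu, h⟩
        refine ⟨hu, ?_⟩
        rw [hdist u hu]
        exact ENNReal.ofReal_le_ofReal h
    rw [hsetc]
    rcases hN0.eq_or_lt with hNz | hNpos
    · -- N = 0
      have : {u : ℝ | 0 < u ∧ u ^ (-qz) * N ≤ s} = Set.Ioi (0:ℝ) := by
        ext u; simp [← hNz, hs]
      rw [this, csInf_Ioi, ← hNz, Real.zero_rpow hiqz0.ne', mul_zero]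
    rcases hs.eq_or_lt with hsz | hspos
    · -- s = 0
      have : {u : ℝ | 0 < u ∧ u ^ (-qz) * N ≤ s} = ∅ := by
        ext u
        simp only [Set.mem_setOf_eq, Set.mem_empty_iff_false, iff_false, not_and, not_le]
        intro hu
        rw [← hsz]
        exact mul_pos (Real.rpow_pos_of_pos hu _) hNpos
      rw [this, Real.sInf_empty, ← hsz, Real.zero_rpow (by simpa using hiqz0.ne'), zero_mul]
    · -- s > 0, N > 0
      have hkey : {u : ℝ | 0 < u ∧ u ^ (-qz) * N ≤ s} = Set.Ici ((N / s) ^ (1 / qz)) := by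
        ext u
        simp only [Set.mem_setOf_eq, Set.mem_Ici]
        constructor
        · rintro ⟨hu, h⟩
          rw [Real.rpow_neg hu.le, inv_mul_le_iff₀ (Real.rpow_pos_of_pos hu qz),
            ← div_le_iff₀ hspos] at h
          calc (N / s) ^ (1 / qz) ≤ (u ^ qz) ^ (1 / qz) :=
                Real.rpow_le_rpow (div_nonneg hN0 hspos.le) h hiqz0.le
            _ = u := by
                rw [← Real.rpow_mul hu.le, mul_one_div_cancel hqz0.ne', Real.rpow_one]
        · intro h
          have hu : 0 < u := lt_of_lt_of_le (Real.rpow_pos_of_pos (div_pos hNpos hspos) _) h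
          refine ⟨hu, ?_⟩
          have h2 : N / s ≤ u ^ qz := by
            calc N / s = ((N / s) ^ (1 / qz)) ^ qz := by
                  rw [← Real.rpow_mul (div_nonneg hN0 hspos.le), one_div_mul_cancel hqz0.ne',
                    Real.rpow_one]
              _ ≤ u ^ qz :=
                  Real.rpow_le_rpow (Real.rpow_nonneg (div_nonneg hN0 hspos.le) _) h hqz0.le
          rw [Real.rpow_neg hu.le, inv_mul_le_iff₀ (Real.rpow_pos_of_pos hu qz),
            ← div_le_iff₀ hspos]
          exact h2
      rw [hkey, csInf_Ici, Real.div_rpow hN0 hspos.le, div_eq_mul_inv,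
        ← Real.rpow_neg hspos.le, mul_comm]
  constructor
  · intro s hs
    exact hre s hs.le
  · -- the weak norm
    have hkey : ∀ t : ℝ, 0 < t →
        t ^ (-(1 / pz)) *
          (∫ s in (0:ℝ)..t, rearr (μ.prod wmeasure) (fun w => x w.1 * fz q z w.2) s) =
        pz * N ^ (1 / qz) := by
      intro t ht
      have h1 : (∫ s in (0:ℝ)..t, rearr (μ.prod wmeasure) (fun w => x w.1 * fz q z w.2) s) =
          ∫ s in (0:ℝ)..t, s ^ (-(1 / qz)) * N ^ (1 / qz) := by
        apply intervalIntegral.integral_congr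
        intro s hssh
        rw [Set.uIcc_of_le ht.le] at hssh
        exact hre s hssh.1
      have hexp : -(1 / qz) + 1 = 1 / pz := by linarith
      have h2 : (∫ s in (0:ℝ)..t, s ^ (-(1 / qz)) * N ^ (1 / qz)) =
          (t ^ (1 / pz) * pz) * N ^ (1 / qz) := by
        rw [intervalIntegral.integral_mul_const, integral_rpow (Or.inl (by linarith)), hexp,
          Real.zero_rpow hipz0.ne', sub_zero, div_eq_mul_inv, ← one_div, one_div_one_div]
      rw [h1, h2, Real.rpow_neg ht.le]
      have htne : t ^ (1 / pz) ≠ 0 := (Real.rpow_pos_of_pos ht _).ne'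
      field_simp
    have hset : {r : ℝ | ∃ t : ℝ, 0 < t ∧
        r = t ^ (-(1 / pz)) *
          ∫ s in (0:ℝ)..t, rearr (μ.prod wmeasure) (fun w => x w.1 * fz q z w.2) s} =
        {pz * N ^ (1 / qz)} := by
      ext r
      simp only [Set.mem_setOf_eq, Set.mem_singleton_iff]
      constructor
      · rintro ⟨t, ht, rfl⟩
        exact hkey t ht
      · rintro rfl
        exact ⟨1, one_pos, (hkey 1 one_pos).symm⟩
    rw [hset, csSup_singleton]
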